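/- arXiv:1002.1887 — 2 statements merged into one kernel-verified Lean document; each statement's English description precedes it below -/
import Mathlib

section
/- If F: E → ℝ≥0 is an edge-weight function on a finite connected graph G, then the connection value F(·,·) restricted to the set of regional minima of F is an ultrametric distance: it is symmetric, nonnegative, satisfies F(X,X)=0 and F(X,Y)=0 implies X=Y for distinct minima X,Y, and F(X,Y) ≤ max(F(X,Z), F(Z,Y)) for all minima X,Y,Z. -/
open SimpleGraph

variable {V : Type*} [Fintype V] [DecidableEq V]

/-- The subgraph of `G` induced by a set `S` of edges: its edges are the edges of `G`
belonging to `S`, and its vertices are the endpoints of those edges. -/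
def edgeInduced (G : SimpleGraph V) (S : Set (Sym2 V)) : G.Subgraph where
  verts := {x | ∃ y, G.Adj x y ∧ s(x, y) ∈ S}
  Adj x y := G.Adj x y ∧ s(x, y) ∈ S
  adj_sub h := h.1
  edge_vert h := ⟨_, h⟩
  symm := ⟨fun x y h => ⟨h.1.symm, by rw [Sym2.eq_swap]; exact h.2⟩⟩

/-- The edge-closing `φ`: `φ(X)` has the same vertices as `X` and all edges of `G`
with both endpoints in `X`. -/
def phi (G : SimpleGraph V) (X : G.Subgraph) : G.Subgraph where
  verts := X.verts
  Adj x y := G.Adj x y ∧ x ∈ X.verts ∧ y ∈ X.verts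
  adj_sub h := h.1
  edge_vert h := h.2.1
  symm := ⟨fun x y h => ⟨h.1.symm, h.2.2, h.2.1⟩⟩

/-- The connected component of the subgraph `S` containing the vertex `x`. -/
def compOf (G : SimpleGraph V) (S : G.Subgraph) (x : V) : G.Subgraph where
  verts := {y ∈ S.verts | S.spanningCoe.Reachable x y}
  Adj a b := S.Adj a b ∧ S.spanningCoe.Reachable x a
  adj_sub h := S.adj_sub h.1
  edge_vert h := ⟨S.edge_vert h.1, h.2⟩
  symm := ⟨fun a b h => ⟨h.1.symm, h.2.trans (SimpleGraph.Adj.reachable (by exact h.1))⟩⟩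

/-- A set `C` of edges of `G` is a cut if every edge of `C` joins two distinct
nonempty connected components of the graph induced by the complementary edges. -/
def IsCut (G : SimpleGraph V) (C : Set (Sym2 V)) : Prop :=
  ∀ x y, G.Adj x y → s(x, y) ∈ C →
    x ∈ (edgeInduced G (G.edgeSet \ C)).verts ∧
    y ∈ (edgeInduced G (G.edgeSet \ C)).verts ∧
    ¬ (edgeInduced G (G.edgeSet \ C)).spanningCoe.Reachable x y

/-- A subgraph `S` of `G` is a segmentation if the complement of its edge set is a cut. -/
def IsSegmentation (G : SimpleGraph V) (S : G.Subgraph) : Prop :=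
  IsCut G (G.edgeSet \ S.edgeSet)

/-- Number of connected components of a subgraph. -/
noncomputable def numComp (G : SimpleGraph V) (S : G.Subgraph) : ℕ :=
  Nat.card S.coe.ConnectedComponent

/-- Adding the edge `{x, y}` (and its endpoints) to the subgraph `X`. -/
def addEdge (G : SimpleGraph V) (X : G.Subgraph) {x y : V} (h : G.Adj x y) : G.Subgraph where
  verts := X.verts ∪ {x, y}
  Adj a b := X.Adj a b ∨ s(a, b) = s(x, y)
  adj_sub := by
    rintro a b (hab | hab)
    · exact X.adj_sub hab
    · rcases Sym2.eq_iff.mp hab with ⟨rfl, rfl⟩ | ⟨rfl, rfl⟩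
      · exact h
      · exact h.symm
  edge_vert := by
    rintro a b (hab | hab)
    · exact Or.inl (X.edge_vert hab)
    · rcases Sym2.eq_iff.mp hab with ⟨rfl, rfl⟩ | ⟨rfl, rfl⟩
      · exact Or.inr (by simp)
      · exact Or.inr (by simp)
  symm := by
    constructor
    rintro a b (hab | hab)
    · exact Or.inl hab.symm
    · right; rwa [Sym2.eq_swap]

/-- The edge `{x, y}` is W-simple for `X` if adding it does not change the number
of connected components. -/
def WSimple (G : SimpleGraph V) (X : G.Subgraph) {x y : V} (h : G.Adj x y) : Prop :=
  numComp G (addEdge G X h) = numComp G X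

/-- `X` is a binary watershed of `G` if no edge outside of `X` is W-simple for `X`. -/
def BinaryWatershed (G : SimpleGraph V) (X : G.Subgraph) : Prop :=
  ∀ x y (h : G.Adj x y), s(x, y) ∉ X.edgeSet → ¬ WSimple G X h

/-- The cross-section `F[l]`: the subgraph induced by the edges of weight at most `l`. -/
def levelSub (G : SimpleGraph V) (F : Sym2 V → NNReal) (l : NNReal) : G.Subgraph :=
  edgeInduced G {e | F e ≤ l}

/-- The connection value between `x` and `y`: the least level `l` such that `x` and `y`
lie in the same connected component of `F[l]`. -/
noncomputable def connVal (G : SimpleGraph V) (F : Sym2 V → NNReal) (x y : V) : NNReal :=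
  sInf {l | (levelSub G F l).spanningCoe.Reachable x y}

/-- The edge `{x, y}` is W-destructible for `F` with lowest value `l0`. -/
def WDestructible (G : SimpleGraph V) (F : Sym2 V → NNReal) {x y : V} (h : G.Adj x y)
    (l0 : NNReal) : Prop :=
  (∀ l1, l0 < l1 → l1 ≤ F s(x, y) → WSimple G (levelSub G F l1) h) ∧
    ¬ WSimple G (levelSub G F l0) h

/-- `F` is a topological watershed if it has no W-destructible edge. -/
def TopologicalWatershed (G : SimpleGraph V) (F : Sym2 V → NNReal) : Prop :=
  ∀ x y (h : G.Adj x y) (l0 : NNReal), ¬ WDestructible G F h l0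

/-- A regional minimum of `F`: a connected component `X` of some cross-section `F[l]`
containing no edge of weight `< l`. -/
def IsMinimum (G : SimpleGraph V) (F : Sym2 V → NNReal) (X : G.Subgraph) : Prop :=
  ∃ (l : NNReal) (x : V), x ∈ (levelSub G F l).verts ∧ X = compOf G (levelSub G F l) x ∧
    ∀ l1 < l, ∀ e ∈ X.edgeSet, ¬ F e ≤ l1

/-- The graph `M(F)`, union of all the regional minima of `F`. -/
def minimaGraph (G : SimpleGraph V) (F : Sym2 V → NNReal) : G.Subgraph where
  verts := {x | ∃ X, IsMinimum G F X ∧ x ∈ X.verts}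
  Adj a b := ∃ X, IsMinimum G F X ∧ X.Adj a b
  adj_sub := by rintro a b ⟨X, _, hab⟩; exact X.adj_sub hab
  edge_vert := by rintro a b ⟨X, hX, hab⟩; exact ⟨X, hX, X.edge_vert hab⟩
  symm := by constructor; rintro a b ⟨X, hX, hab⟩; exact ⟨X, hX, hab.symm⟩

/-- Connection value between two subgraphs: `F(X,Y) = min {F(x,y) : x ∈ X, y ∈ Y}`. -/
noncomputable def connValSub (G : SimpleGraph V) (F : Sym2 V → NNReal)
    (X Y : G.Subgraph) : NNReal :=
  sInf {l | ∃ x ∈ X.verts, ∃ y ∈ Y.verts, connVal G F x y = l}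

/-- An ultrametric watershed: a topological watershed which is null on all its minima. -/
def UltrametricWatershed (G : SimpleGraph V) (F : Sym2 V → NNReal) : Prop :=
  TopologicalWatershed G F ∧ ∀ X, IsMinimum G F X → ∀ e ∈ X.edgeSet, F e = 0

/-- The regions of a segmentation `S`: its connected components. -/
def Regions (G : SimpleGraph V) (S : G.Subgraph) : Set G.Subgraph :=
  {X | ∃ x ∈ S.verts, X = compOf G S x}

/-- A hierarchical segmentation on `G`: an indexed hierarchy `(H, μ)` on the set of
regions of a segmentation `S` of `G` such that the edge-closing of the union of the
regions of each member of the hierarchy is connected. -/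
structure HierSeg {V : Type*} [Fintype V] [DecidableEq V] (G : SimpleGraph V) where
  S : G.Subgraph
  seg : IsSegmentation G S
  H : Set (Set G.Subgraph)
  hsub : ∀ h ∈ H, h ⊆ Regions G S
  htop : Regions G S ∈ H
  hsing : ∀ X ∈ Regions G S, {X} ∈ H
  hnest : ∀ h ∈ H, ∀ h' ∈ H, (h ∩ h').Nonempty → h ⊆ h' ∨ h' ⊆ h
  mu : Set G.Subgraph → NNReal
  mu_zero : ∀ h ∈ H, (mu h = 0 ↔ ∃ X, h = {X})
  mu_mono : ∀ h ∈ H, ∀ h' ∈ H, h ⊂ h' → mu h < mu h'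
  mu_out : ∀ h ∉ H, mu h = 0
  hconn : ∀ h ∈ H, (phi G (sSup h)).Connected

/-- `H[l]`: the graph induced by the (edge-closed unions of regions of the) members
of the hierarchy at level at most `l`. -/
def HLevel (G : SimpleGraph V) (HS : HierSeg G) (l : NNReal) : G.Subgraph :=
  sSup {K | ∃ h ∈ HS.H, HS.mu h ≤ l ∧ K = phi G (sSup h)}

/-- The saliency map of a hierarchical segmentation. -/
noncomputable def saliencyMap (G : SimpleGraph V) (HS : HierSeg G) : Sym2 V → NNReal :=
  fun e => sInf {l | e ∈ (HLevel G HS l).edgeSet}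

/-- The ultrametric opening `Ψ`. -/
noncomputable def psi (G : SimpleGraph V) (F : Sym2 V → NNReal) : Sym2 V → NNReal :=
  Sym2.lift ⟨fun x y => connVal G F x y, fun x y => by
    have hs : {l | (levelSub G F l).spanningCoe.Reachable x y} =
        {l | (levelSub G F l).spanningCoe.Reachable y x} := by
      ext l
      exact ⟨fun hr => hr.symm, fun hr => hr.symm⟩
    show sInf _ = sInf _
    rw [hs]⟩

/-- Altitude of the lowest component of `F` containing `x`. -/
noncomputable def vertAlt (G : SimpleGraph V) (F : Sym2 V → NNReal) (x : V) : NNReal :=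
  sInf {l | x ∈ (levelSub G F l).verts}

/-- `x` and `y` are `l`-separated for `F`. -/
def SeparatedAt (G : SimpleGraph V) (F : Sym2 V → NNReal) (x y : V) (l : NNReal) : Prop :=
  connVal G F x y = l ∧ max (vertAlt G F x) (vertAlt G F y) < l

/-- `F'` is a separation of `F`. -/
def IsSeparation (G : SimpleGraph V) (F F' : Sym2 V → NNReal) : Prop :=
  ∀ x y l, SeparatedAt G F x y l → SeparatedAt G F' x y l

/-- `C` is a connected component of the cross-section `F[l]`. -/
def IsCompAt (G : SimpleGraph V) (F : Sym2 V → NNReal) (l : NNReal) (C : G.Subgraph) : Prop :=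
  ∃ x ∈ (levelSub G F l).verts, C = compOf G (levelSub G F l) x

/-- `h(C)`: the smallest level at which `C` is a component of `F`. -/
noncomputable def hVal (G : SimpleGraph V) (F : Sym2 V → NNReal) (C : G.Subgraph) : NNReal :=
  sInf {l | IsCompAt G F l C}



section Helpers

variable (G : SimpleGraph V) (F : Sym2 V → NNReal)

lemma reach_mono {l l' : NNReal} (h : l ≤ l') {x y : V}
    (hr : (levelSub G F l).spanningCoe.Reachable x y) :
    (levelSub G F l').spanningCoe.Reachable x y := by
  refine hr.mono ?_
  intro a b hab'
  obtain ⟨hab, hF⟩ : G.Adj a b ∧ F s(a, b) ≤ l := hab'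
  exact (show G.Adj a b ∧ F s(a, b) ≤ l' from ⟨hab, le_trans hF h⟩)

lemma reach_nonempty (hG : G.Connected) (x y : V) :
    ∃ l, (levelSub G F l).spanningCoe.Reachable x y := by
  refine ⟨Finset.univ.sup F, (hG.preconnected x y).mono ?_⟩
  intro a b hab
  exact (show G.Adj a b ∧ F s(a, b) ≤ Finset.univ.sup F from ⟨hab, Finset.le_sup (f := F) (Finset.mem_univ s(a, b))⟩)

lemma connVal_spec (hG : G.Connected) (x y : V) :
    (levelSub G F (connVal G F x y)).spanningCoe.Reachable x y := by
  set S : Set NNReal := {l | (levelSub G F l).spanningCoe.Reachable x y} with hS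
  have hSne : S.Nonempty := reach_nonempty G F hG x y
  classical
  set A : Finset NNReal := insert 0 (Finset.image F Finset.univ) with hA
  have claim1 : ∀ l ∈ S, ∃ m ∈ (↑A : Set NNReal) ∩ S, m ≤ l := by
    intro l hl
    have hfne : (A.filter (· ≤ l)).Nonempty :=
      ⟨0, Finset.mem_filter.2 ⟨Finset.mem_insert_self _ _, zero_le⟩⟩
    set m := (A.filter (· ≤ l)).max' hfne with hm
    have hmem := (A.filter (· ≤ l)).max'_mem hfne
    have hmA : m ∈ A := (Finset.mem_filter.1 hmem).1
    have hml : m ≤ l := (Finset.mem_filter.1 hmem).2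
    have hsets : {e : Sym2 V | F e ≤ l} = {e : Sym2 V | F e ≤ m} := by
      ext e
      constructor
      · intro h
        exact Finset.le_max' _ _ (Finset.mem_filter.2
          ⟨Finset.mem_insert_of_mem (Finset.mem_image_of_mem F (Finset.mem_univ e)), h⟩)
      · intro h
        exact le_trans h hml
    have hlev : levelSub G F l = levelSub G F m := by
      unfold levelSub
      rw [hsets]
    have hmS : m ∈ S := by
      simp only [hS, Set.mem_setOf_eq] at hl ⊢
      rwa [hlev] at hl
    exact ⟨m, ⟨hmA, hmS⟩, hml⟩
  have hTfin : ((↑A : Set NNReal) ∩ S).Finite :=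
    Set.Finite.subset A.finite_toSet Set.inter_subset_left
  obtain ⟨l0, hl0⟩ := hSne
  obtain ⟨m0, hm0, _⟩ := claim1 l0 hl0
  have hTne : ((↑A : Set NNReal) ∩ S).Nonempty := ⟨m0, hm0⟩
  have hmemT : sInf ((↑A : Set NNReal) ∩ S) ∈ (↑A : Set NNReal) ∩ S :=
    Set.Nonempty.csInf_mem hTne hTfin
  have heq : sInf S = sInf ((↑A : Set NNReal) ∩ S) := by
    apply le_antisymm
    · exact csInf_le_csInf (OrderBot.bddBelow _) hTne Set.inter_subset_right
    · refine le_csInf ⟨l0, hl0⟩ ?_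
      intro l hl
      obtain ⟨m, hmT, hml⟩ := claim1 l hl
      exact le_trans (csInf_le (OrderBot.bddBelow _) hmT) hml
  have : connVal G F x y ∈ S := by
    show sInf S ∈ S
    rw [heq]
    exact hmemT.2
  exact this

lemma connVal_le_of_reach {l : NNReal} {x y : V}
    (h : (levelSub G F l).spanningCoe.Reachable x y) : connVal G F x y ≤ l :=
  csInf_le (OrderBot.bddBelow _) h

lemma connVal_self (x : V) : connVal G F x x = 0 :=
  le_antisymm (connVal_le_of_reach G F (SimpleGraph.Reachable.refl x)) zero_le

lemma connVal_comm (x y : V) : connVal G F x y = connVal G F y x := by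
  unfold connVal
  congr 1
  ext l
  exact ⟨fun h => h.symm, fun h => h.symm⟩

lemma connVal_ultra (hG : G.Connected) (x y z : V) :
    connVal G F x y ≤ max (connVal G F x z) (connVal G F z y) := by
  have h1 := reach_mono G F (le_max_left (connVal G F x z) (connVal G F z y))
    (connVal_spec G F hG x z)
  have h2 := reach_mono G F (le_max_right (connVal G F x z) (connVal G F z y))
    (connVal_spec G F hG z y)
  exact connVal_le_of_reach G F (h1.trans h2)

lemma min_vert_nonempty {X : G.Subgraph} (hX : IsMinimum G F X) : X.verts.Nonempty := by
  obtain ⟨l, x, hx, rfl, -⟩ := hX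
  exact ⟨x, (show x ∈ (levelSub G F l).verts ∧ (levelSub G F l).spanningCoe.Reachable x x from ⟨hx, SimpleGraph.Reachable.refl x⟩)⟩

lemma connValSub_spec {X Y : G.Subgraph} (hX : X.verts.Nonempty) (hY : Y.verts.Nonempty) :
    ∃ x ∈ X.verts, ∃ y ∈ Y.verts, connVal G F x y = connValSub G F X Y := by
  classical
  set P : Set NNReal := {l | ∃ x ∈ X.verts, ∃ y ∈ Y.verts, connVal G F x y = l} with hP
  have hfin : P.Finite := by
    refine Set.Finite.subset (Set.finite_range (fun p : V × V => connVal G F p.1 p.2)) ?_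
    rintro l ⟨x, -, y, -, rfl⟩
    exact ⟨(x, y), rfl⟩
  obtain ⟨x, hx⟩ := hX
  obtain ⟨y, hy⟩ := hY
  have hne : P.Nonempty := ⟨connVal G F x y, x, hx, y, hy, rfl⟩
  have := Set.Nonempty.csInf_mem hne hfin
  obtain ⟨x', hx', y', hy', h⟩ := this
  exact ⟨x', hx', y', hy', h⟩

lemma connValSub_le {X Y : G.Subgraph} {x y : V} (hx : x ∈ X.verts) (hy : y ∈ Y.verts) :
    connValSub G F X Y ≤ connVal G F x y :=
  csInf_le (OrderBot.bddBelow _) ⟨x, hx, y, hy, rfl⟩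

lemma compOf_le {l l' : NNReal} {x0 y0 x y : V} (hle : l ≤ l')
    (hx : x ∈ (compOf G (levelSub G F l) x0).verts)
    (hy : y ∈ (compOf G (levelSub G F l') y0).verts)
    (hr : (levelSub G F l).spanningCoe.Reachable x y) :
    compOf G (levelSub G F l) x0 ≤ compOf G (levelSub G F l') y0 := by
  have key : ∀ v, (levelSub G F l).spanningCoe.Reachable x0 v →
      (levelSub G F l').spanningCoe.Reachable y0 v := by
    intro v hv
    exact (show _ ∧ _ from hy).2.trans (reach_mono G F hle (hr.symm.trans ((show _ ∧ _ from hx).2.symm.trans hv)))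
  constructor
  · intro v hv
    obtain ⟨⟨w, hw, hFw⟩, hv2⟩ : (∃ w, G.Adj v w ∧ F s(v, w) ≤ l) ∧ (levelSub G F l).spanningCoe.Reachable x0 v := hv
    exact (show (∃ w, G.Adj v w ∧ F s(v, w) ≤ l') ∧ _ from ⟨⟨w, hw, le_trans hFw hle⟩, key v hv2⟩)
  · intro a b hab'
    obtain ⟨⟨hab, hFab⟩, ha⟩ : (G.Adj a b ∧ F s(a, b) ≤ l) ∧ (levelSub G F l).spanningCoe.Reachable x0 a := hab'
    exact (show (G.Adj a b ∧ F s(a, b) ≤ l') ∧ _ from ⟨⟨hab, le_trans hFab hle⟩, key a ha⟩)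

lemma wall {l l' : NNReal} {z0 z w : V}
    (hmin : ∀ l1 < l, ∀ e ∈ (compOf G (levelSub G F l) z0).edgeSet, ¬ F e ≤ l1)
    (hz : z ∈ (compOf G (levelSub G F l) z0).verts) (hl : l' < l)
    (h : (levelSub G F l').spanningCoe.Reachable z w) : w = z := by
  obtain ⟨p⟩ := h
  cases p with
  | nil => rfl
  | cons h' p' =>
    obtain ⟨hab, hF⟩ : _ ∧ _ := h'
    exact absurd hF
      (hmin l' hl _ (SimpleGraph.Subgraph.mem_edgeSet.2 (show (_ ∧ _) ∧ _ from ⟨⟨hab, le_trans hF hl.le⟩, (show _ ∧ _ from hz).2⟩)))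

lemma eqMin_aux {l l' : NNReal} {x0 y0 x y : V} (hle : l ≤ l')
    (hx0 : x0 ∈ (levelSub G F l).verts)
    (hminY : ∀ l1 < l', ∀ e ∈ (compOf G (levelSub G F l') y0).edgeSet, ¬ F e ≤ l1)
    (hx : x ∈ (compOf G (levelSub G F l) x0).verts)
    (hy : y ∈ (compOf G (levelSub G F l') y0).verts)
    (hr : ∀ m : NNReal, (levelSub G F m).spanningCoe.Reachable x y) :
    compOf G (levelSub G F l) x0 = compOf G (levelSub G F l') y0 := by
  have h1 := compOf_le G F hle hx hy (hr l)
  obtain ⟨w, hw, hFw⟩ : ∃ w, G.Adj x0 w ∧ F s(x0, w) ≤ l := hx0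
  have hXadj : (compOf G (levelSub G F l) x0).Adj x0 w :=
    show (_ ∧ _) ∧ _ from ⟨⟨hw, hFw⟩, SimpleGraph.Reachable.refl x0⟩
  have hYadj : (compOf G (levelSub G F l') y0).Adj x0 w := h1.2 hXadj
  have hl'le : l' ≤ F s(x0, w) := by
    by_contra hlt
    push_neg at hlt
    exact hminY (F s(x0, w)) hlt s(x0, w)
      (SimpleGraph.Subgraph.mem_edgeSet.2 hYadj) le_rfl
  have heq : l = l' := le_antisymm hle (le_trans hl'le hFw)
  subst heq
  exact le_antisymm h1 (compOf_le G F le_rfl hy hx (hr l).symm)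

lemma eqMin {X Y : G.Subgraph} (hX : IsMinimum G F X) (hY : IsMinimum G F Y)
    {x y : V} (hx : x ∈ X.verts) (hy : y ∈ Y.verts)
    (hr : ∀ m : NNReal, (levelSub G F m).spanningCoe.Reachable x y) : X = Y := by
  obtain ⟨l, x0, hx0, rfl, hminX⟩ := hX
  obtain ⟨l', y0, hy0, rfl, hminY⟩ := hY
  rcases le_total l l' with hle | hle
  · exact eqMin_aux G F hle hx0 hminY hx hy hr
  · exact (eqMin_aux G F hle hy0 hminX hy hx (fun m => (hr m).symm)).symm

end Helpers

theorem stmt5 (G : SimpleGraph V) (hG : G.Connected) (F : Sym2 V → NNReal) :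
    (∀ X Y : G.Subgraph, IsMinimum G F X → IsMinimum G F Y →
      connValSub G F X Y = connValSub G F Y X) ∧
    (∀ X : G.Subgraph, IsMinimum G F X → connValSub G F X X = 0) ∧
    (∀ X Y : G.Subgraph, IsMinimum G F X → IsMinimum G F Y →
      connValSub G F X Y = 0 → X = Y) ∧
    (∀ X Y Z : G.Subgraph, IsMinimum G F X → IsMinimum G F Y → IsMinimum G F Z →
      connValSub G F X Y ≤ max (connValSub G F X Z) (connValSub G F Z Y)) := by
  refine ⟨?_, ?_, ?_, ?_⟩
  · -- symmetry
    intro X Y _ _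
    unfold connValSub
    congr 1
    ext l
    constructor
    · rintro ⟨x, hx, y, hy, rfl⟩
      exact ⟨y, hy, x, hx, (connVal_comm G F y x)⟩
    · rintro ⟨y, hy, x, hx, rfl⟩
      exact ⟨x, hx, y, hy, (connVal_comm G F x y)⟩
  · -- F(X,X) = 0
    intro X hX
    obtain ⟨x, hx⟩ := min_vert_nonempty G F hX
    refine le_antisymm ?_ zero_le
    have : connValSub G F X X ≤ connVal G F x x := connValSub_le G F hx hx
    rwa [connVal_self G F x] at this
  · -- separation
    intro X Y hX hY h0
    obtain ⟨x, hx, y, hy, hxy⟩ := connValSub_spec G F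
      (min_vert_nonempty G F hX) (min_vert_nonempty G F hY)
    rw [h0] at hxy
    have hreach0 : (levelSub G F 0).spanningCoe.Reachable x y := by
      have := connVal_spec G F hG x y
      rwa [hxy] at this
    exact eqMin G F hX hY hx hy (fun m => reach_mono G F (zero_le : (0 : NNReal) ≤ m) hreach0)
  · -- ultrametric inequality
    intro X Y Z hX hY hZ
    obtain ⟨x, hx, z, hz, haxz⟩ := connValSub_spec G F
      (min_vert_nonempty G F hX) (min_vert_nonempty G F hZ)
    obtain ⟨z', hz', y, hy, hbzy⟩ := connValSub_spec G F
      (min_vert_nonempty G F hZ) (min_vert_nonempty G F hY)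
    have hZ' := hZ
    obtain ⟨lZ, z0, hz0, hZeq, hminZ⟩ := hZ'
    by_cases hcase : connValSub G F X Z < lZ
    · -- then x = z, so X = Z
      have hrx : (levelSub G F (connValSub G F X Z)).spanningCoe.Reachable z x := by
        have := (connVal_spec G F hG x z).symm
        rwa [haxz] at this
      have hxz : x = z := by
        rw [hZeq] at hz hminZ
        exact wall G F hminZ hz hcase hrx
      subst hxz
      have hXZ : X = Z := eqMin G F hX hZ hx hz (fun m => SimpleGraph.Reachable.refl x)
      rw [hXZ]
      exact le_max_right _ _
    · push_neg at hcase
      -- connVal z z' ≤ lZ ≤ connValSub X Z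
      have hzz' : connVal G F z z' ≤ lZ := by
        rw [hZeq] at hz hz'
        exact connVal_le_of_reach G F ((show _ ∧ _ from hz).2.symm.trans (show _ ∧ _ from hz').2)
      have h1 : connVal G F x y ≤ max (connValSub G F X Z) (connValSub G F Z Y) := by
        have u1 := connVal_ultra G F hG x y z
        have u2 := connVal_ultra G F hG z y z'
        rw [haxz] at u1
        rw [hbzy] at u2
        have hzy : connVal G F z y ≤ max (connValSub G F X Z) (connValSub G F Z Y) :=
          u2.trans (max_le ((hzz'.trans hcase).trans (le_max_left _ _)) (le_max_right _ _))
        exact u1.trans (max_le (le_max_left _ _) hzy)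
      exact (connValSub_le G F hx hy).trans h1
end

section
/- If F' ≤ F are two edge-weight functions on a finite connected graph G, then F' is a separation of F if and only if for all pairs of distinct regional minima X, Y of F, the connection values satisfy F'(X,Y) = F(X,Y). -/
open SimpleGraph

variable {V : Type*} [Fintype V] [DecidableEq V]

set_option linter.unusedSectionVars false
set_option linter.unnecessarySimpa false
-- basics
lemma aux_level_imp (G : SimpleGraph V) (F : Sym2 V → NNReal) {l l' : NNReal}
    (h : ∀ e : Sym2 V, F e ≤ l → F e ≤ l') : levelSub G F l ≤ levelSub G F l' :=
  ⟨by rintro x ⟨y, hxy, he⟩; exact ⟨y, hxy, h _ he⟩,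
   by rintro a b ⟨hab, he⟩; exact ⟨hab, h _ he⟩⟩

lemma aux_level_mono (G : SimpleGraph V) (F : Sym2 V → NNReal) {l l' : NNReal} (h : l ≤ l') :
    levelSub G F l ≤ levelSub G F l' := aux_level_imp G F fun _ he => he.trans h

lemma aux_level_anti (G : SimpleGraph V) {F F' : Sym2 V → NNReal} (hle : ∀ e, F' e ≤ F e)
    (l : NNReal) : levelSub G F l ≤ levelSub G F' l :=
  ⟨by rintro x ⟨y, hxy, he⟩; exact ⟨y, hxy, (hle _).trans he⟩,
   by rintro a b ⟨hab, he⟩; exact ⟨hab, (hle _).trans he⟩⟩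

lemma aux_reach_mono {G : SimpleGraph V} {H H' : G.Subgraph} (h : H ≤ H') {x y : V}
    (hr : H.spanningCoe.Reachable x y) : H'.spanningCoe.Reachable x y :=
  hr.mono fun {_ _} hab => h.2 hab

lemma aux_reach_vert {G : SimpleGraph V} {H : G.Subgraph} {x y : V}
    (hr : H.spanningCoe.Reachable x y) : x = y ∨ y ∈ H.verts := by
  obtain ⟨w⟩ := hr
  cases hw : w.reverse with
  | nil => left; simpa using congrArg Walk.reverse hw.symm ▸ rfl
  | cons h p => right; exact H.edge_vert (h : H.Adj y _)

-- attainment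
lemma aux_attain (F : Sym2 V → NNReal) (S : Set NNReal)
    (hdep : ∀ l l', (∀ e : Sym2 V, F e ≤ l → F e ≤ l') → l ∈ S → l' ∈ S)
    (hne : S.Nonempty) : sInf S ∈ S := by
  classical
  set lam := sInf S with hlam
  have key : ∀ l, lam < l → l ∈ S := by
    intro l hl
    obtain ⟨s, hs, hsl⟩ := exists_lt_of_csInf_lt hne (hlam ▸ hl)
    exact hdep s l (fun e he => he.trans hsl.le) hs
  obtain ⟨l, hl1, hl2⟩ : ∃ l, lam < l ∧ ∀ e : Sym2 V, F e ≤ l → F e ≤ lam := by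
    set B := (Finset.univ.image F).filter (fun v => lam < v) with hB
    rcases B.eq_empty_or_nonempty with hBe | hBne
    · refine ⟨lam + 1, lt_add_of_pos_right _ one_pos, fun e _ => ?_⟩
      by_contra hc
      have : F e ∈ B := Finset.mem_filter.mpr
        ⟨Finset.mem_image_of_mem F (Finset.mem_univ e), lt_of_not_ge hc⟩
      simp [hBe] at this
    · set b := B.min' hBne with hb
      have hbmem := B.min'_mem hBne
      have hlamb : lam < b := (Finset.mem_filter.mp hbmem).2
      have hmid1 : lam < (lam + b) / 2 := by
        rw [← NNReal.coe_lt_coe] at *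
        push_cast
        linarith
      have hmid2 : (lam + b) / 2 < b := by
        rw [← NNReal.coe_lt_coe] at *
        push_cast
        linarith
      refine ⟨(lam + b) / 2, hmid1, fun e he => ?_⟩
      by_contra hc
      have hFB : F e ∈ B := Finset.mem_filter.mpr
        ⟨Finset.mem_image_of_mem F (Finset.mem_univ e), lt_of_not_ge hc⟩
      exact absurd ((B.min'_le _ hFB).trans he) (not_le.mpr hmid2)
  exact hdep l lam hl2 (key l hl1)

lemma aux_reach_nonempty {G : SimpleGraph V} (hG : G.Connected)
    (F : Sym2 V → NNReal) (x y : V) :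
    {l | (levelSub G F l).spanningCoe.Reachable x y}.Nonempty := by
  classical
  have hne : (Finset.univ.image F).Nonempty :=
    ⟨F s(x, x), Finset.mem_image_of_mem F (Finset.mem_univ _)⟩
  set L := (Finset.univ.image F).max' hne with hL
  have hFL : ∀ e : Sym2 V, F e ≤ L :=
    fun e => Finset.le_max' _ _ (Finset.mem_image_of_mem F (Finset.mem_univ e))
  refine ⟨L, (hG.preconnected x y).mono ?_⟩
  intro a b hab
  exact (⟨hab, hFL _⟩ : (levelSub G F L).Adj a b)

lemma aux_reach_connVal {G : SimpleGraph V} (hG : G.Connected) (F : Sym2 V → NNReal) (x y : V) :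
    (levelSub G F (connVal G F x y)).spanningCoe.Reachable x y :=
  aux_attain F _ (fun _ _ himp hl => aux_reach_mono (aux_level_imp G F himp) hl)
    (aux_reach_nonempty hG F x y)

lemma aux_connVal_le {G : SimpleGraph V} {F : Sym2 V → NNReal} {x y : V} {l : NNReal}
    (h : (levelSub G F l).spanningCoe.Reachable x y) : connVal G F x y ≤ l :=
  csInf_le (OrderBot.bddBelow _) h

lemma aux_reach_of_le {G : SimpleGraph V} (hG : G.Connected) {F : Sym2 V → NNReal} {x y : V}
    {l : NNReal} (h : connVal G F x y ≤ l) : (levelSub G F l).spanningCoe.Reachable x y :=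
  aux_reach_mono (aux_level_mono G F h) (aux_reach_connVal hG F x y)

lemma aux_connVal_comm (G : SimpleGraph V) (F : Sym2 V → NNReal) (x y : V) :
    connVal G F x y = connVal G F y x := by
  unfold connVal
  congr 1
  ext l
  exact ⟨fun h => h.symm, fun h => h.symm⟩

lemma aux_ultra {G : SimpleGraph V} (hG : G.Connected) (F : Sym2 V → NNReal) (x y z : V) :
    connVal G F x z ≤ max (connVal G F x y) (connVal G F y z) := by
  apply aux_connVal_le
  exact (aux_reach_of_le hG (le_max_left _ _)).trans (aux_reach_of_le hG (le_max_right _ _))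

lemma aux_ultra3 {G : SimpleGraph V} (hG : G.Connected) (F : Sym2 V → NNReal) (x m m' y : V) :
    connVal G F x y ≤
      max (connVal G F x m) (max (connVal G F m m') (connVal G F m' y)) :=
  (aux_ultra hG F x m y).trans (max_le_max le_rfl (aux_ultra hG F m m' y))

lemma aux_max3 {a b c lam : NNReal} (h : lam ≤ max a (max b c)) (ha : a < lam) (hc : c < lam) :
    lam ≤ b := by
  rcases le_max_iff.mp h with h' | h'
  · exact absurd h' (not_le.mpr ha)
  · rcases le_max_iff.mp h' with h'' | h''
    · exact h''
    · exact absurd h'' (not_le.mpr hc)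

lemma aux_connVal_anti {G : SimpleGraph V} (hG : G.Connected) {F F' : Sym2 V → NNReal}
    (hle : ∀ e, F' e ≤ F e) (x y : V) : connVal G F' x y ≤ connVal G F x y :=
  csInf_le_csInf (OrderBot.bddBelow _) (aux_reach_nonempty hG F x y)
    (fun _ hl => aux_reach_mono (aux_level_anti G hle _) hl)

lemma aux_vertAlt_le {G : SimpleGraph V} {F : Sym2 V → NNReal} {x : V} {l : NNReal}
    (h : x ∈ (levelSub G F l).verts) : vertAlt G F x ≤ l :=
  csInf_le (OrderBot.bddBelow _) h

lemma aux_vertAlt_mem {G : SimpleGraph V} {F : Sym2 V → NNReal} {x z : V} (hz : G.Adj x z) :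
    x ∈ (levelSub G F (vertAlt G F x)).verts :=
  aux_attain F _ (fun _ _ himp hl => (aux_level_imp G F himp).1 hl)
    ⟨F s(x, z), z, hz, by exact le_refl (F s(x, z))⟩

lemma aux_vertAlt_anti {G : SimpleGraph V} {F F' : Sym2 V → NNReal}
    (hle : ∀ e, F' e ≤ F e) {x z : V} (hz : G.Adj x z) : vertAlt G F' x ≤ vertAlt G F x :=
  csInf_le_csInf (OrderBot.bddBelow _) ⟨F s(x, z), z, hz, by exact le_refl (F s(x, z))⟩
    (fun _ hl => (aux_level_anti G hle _).1 hl)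

lemma aux_exists_adj {G : SimpleGraph V} (hG : G.Connected) {x y : V} (hxy : x ≠ y) (v : V) :
    ∃ z, G.Adj v z := by
  by_cases h : v = x
  · obtain ⟨w⟩ := hG.preconnected v y
    cases w with
    | nil => exact absurd h.symm hxy
    | cons h _ => exact ⟨_, h⟩
  · obtain ⟨w⟩ := hG.preconnected v x
    cases w with
    | nil => exact absurd rfl h
    | cons h _ => exact ⟨_, h⟩

lemma aux_compOf_eq {G : SimpleGraph V} {S : G.Subgraph} {x z : V}
    (hz : z ∈ (compOf G S x).verts) : compOf G S z = compOf G S x := by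
  obtain ⟨hzS, hreach⟩ := hz
  refine Subgraph.ext ?_ ?_
  · ext a
    exact and_congr_right fun _ => ⟨hreach.trans, fun h => hreach.symm.trans h⟩
  · ext a b
    exact and_congr_right fun _ => ⟨hreach.trans, fun h => hreach.symm.trans h⟩

lemma aux_compOf_mono {G : SimpleGraph V} {S S' : G.Subgraph} (h : S ≤ S') (x : V) :
    compOf G S x ≤ compOf G S' x :=
  ⟨fun _ ha => ⟨h.1 ha.1, aux_reach_mono h ha.2⟩,
   fun _ _ hab => ⟨h.2 hab.1, aux_reach_mono h hab.2⟩⟩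

lemma aux_min_edge_ge {G : SimpleGraph V} {F : Sym2 V → NNReal} {X : G.Subgraph} {l : NNReal}
    (hmin : ∀ l1 < l, ∀ e ∈ X.edgeSet, ¬ F e ≤ l1) {e : Sym2 V} (he : e ∈ X.edgeSet) :
    l ≤ F e := by
  by_contra h
  exact hmin (F e) (lt_of_not_ge h) e he le_rfl

lemma aux_min_no_low_edge {G : SimpleGraph V} {F : Sym2 V → NNReal} {lX : NNReal} {x₀ m w : V}
    (hm : m ∈ (compOf G (levelSub G F lX) x₀).verts)
    (hmin : ∀ l1 < lX, ∀ e ∈ (compOf G (levelSub G F lX) x₀).edgeSet, ¬ F e ≤ l1)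
    (hw : G.Adj m w) : lX ≤ F s(m, w) := by
  by_contra h
  have hadj : (compOf G (levelSub G F lX) x₀).Adj m w :=
    ⟨⟨hw, le_of_lt (lt_of_not_ge h)⟩, hm.2⟩
  exact hmin (F s(m, w)) (lt_of_not_ge h) _ (Subgraph.mem_edgeSet.mpr hadj) le_rfl

lemma aux_min_vertAlt {G : SimpleGraph V} {F : Sym2 V → NNReal} {lX : NNReal} {x₀ m : V}
    (hm : m ∈ (compOf G (levelSub G F lX) x₀).verts)
    (hmin : ∀ l1 < lX, ∀ e ∈ (compOf G (levelSub G F lX) x₀).edgeSet, ¬ F e ≤ l1) :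
    vertAlt G F m = lX := by
  refine le_antisymm (aux_vertAlt_le hm.1) (le_csInf ⟨lX, hm.1⟩ ?_)
  rintro b ⟨w, hw, hF⟩
  exact (aux_min_no_low_edge hm hmin hw).trans hF

lemma aux_min_connVal_le {G : SimpleGraph V} {F : Sym2 V → NNReal} {lX : NNReal} {x₀ m m' : V}
    (hm : m ∈ (compOf G (levelSub G F lX) x₀).verts)
    (hm' : m' ∈ (compOf G (levelSub G F lX) x₀).verts) :
    connVal G F m m' ≤ lX :=
  aux_connVal_le (hm.2.symm.trans hm'.2)

lemma aux_min_disj' {G : SimpleGraph V} {F : Sym2 V → NNReal} {lX lY : NNReal} {x₀ y₀ : V}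
    (hll : lX ≤ lY)
    (hminY : ∀ l1 < lY, ∀ e ∈ (compOf G (levelSub G F lY) y₀).edgeSet, ¬ F e ≤ l1)
    {z : V} (hzX : z ∈ (compOf G (levelSub G F lX) x₀).verts)
    (hzY : z ∈ (compOf G (levelSub G F lY) y₀).verts) :
    compOf G (levelSub G F lX) x₀ = compOf G (levelSub G F lY) y₀ := by
  have hXz : compOf G (levelSub G F lX) x₀ = compOf G (levelSub G F lX) z :=
    (aux_compOf_eq hzX).symm
  have hYz : compOf G (levelSub G F lY) y₀ = compOf G (levelSub G F lY) z :=
    (aux_compOf_eq hzY).symm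
  obtain ⟨w, hw, hF⟩ := hzX.1
  have heX : (compOf G (levelSub G F lX) x₀).Adj z w := ⟨⟨hw, hF⟩, hzX.2⟩
  have hXY : compOf G (levelSub G F lX) z ≤ compOf G (levelSub G F lY) z :=
    aux_compOf_mono (aux_level_mono G F hll) z
  have heY : s(z, w) ∈ (compOf G (levelSub G F lY) y₀).edgeSet := by
    rw [hYz]
    exact Subgraph.edgeSet_mono hXY (by rw [← hXz]; exact Subgraph.mem_edgeSet.mpr heX)
  have h1 : lY ≤ F s(z, w) := aux_min_edge_ge hminY heY
  have h2 : lX = lY := le_antisymm hll (h1.trans hF)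
  rw [hXz, hYz, h2]

lemma aux_min_disj {G : SimpleGraph V} {F : Sym2 V → NNReal} {X Y : G.Subgraph}
    (hX : IsMinimum G F X) (hY : IsMinimum G F Y)
    {z : V} (hzX : z ∈ X.verts) (hzY : z ∈ Y.verts) : X = Y := by
  obtain ⟨lX, x₀, hx₀, rfl, hminX⟩ := hX
  obtain ⟨lY, y₀, hy₀, rfl, hminY⟩ := hY
  rcases le_total lX lY with h | h
  · exact aux_min_disj' h hminY hzX hzY
  · exact (aux_min_disj' h hminX hzY hzX).symm

lemma aux_descent (G : SimpleGraph V) (F : Sym2 V → NNReal) {x : V} {l : NNReal}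
    (hx : x ∈ (levelSub G F l).verts) :
    ∃ X, IsMinimum G F X ∧ ∃ m ∈ X.verts, (levelSub G F l).spanningCoe.Reachable x m := by
  classical
  set C := compOf G (levelSub G F l) x with hC
  obtain ⟨w, hadj, hF⟩ := hx
  have hxw : C.Adj x w := ⟨⟨hadj, hF⟩, Reachable.refl x⟩
  have hEsne : (F '' C.edgeSet).Nonempty :=
    ⟨F s(x, w), s(x, w), Subgraph.mem_edgeSet.mpr hxw, rfl⟩
  have hEsfin : (F '' C.edgeSet).Finite := (Set.toFinite _).image F
  obtain ⟨e, heC, heF⟩ := hEsne.csInf_mem hEsfin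
  set l'' := sInf (F '' C.edgeSet) with hl''
  revert heC heF
  induction e using Sym2.ind with
  | _ a b =>
    intro heC heF
    have hab : C.Adj a b := Subgraph.mem_edgeSet.mp heC
    obtain ⟨⟨hGab, hFab⟩, hxa⟩ := hab
    have hll : l'' ≤ l := heF ▸ hFab
    have ha : a ∈ (levelSub G F l'').verts := ⟨b, hGab, le_of_eq heF⟩
    refine ⟨compOf G (levelSub G F l'') a, ⟨l'', a, ha, rfl, ?_⟩,
      a, ⟨ha, Reachable.refl a⟩, hxa⟩
    intro l1 hl1 e' he' hFe'
    have hlevel : levelSub G F l'' ≤ levelSub G F l := aux_level_mono G F hll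
    have hsub : compOf G (levelSub G F l'') a ≤ C := by
      constructor
      · rintro p ⟨hp, hr⟩
        exact ⟨hlevel.1 hp, hxa.trans (aux_reach_mono hlevel hr)⟩
      · rintro p q ⟨hpq, hr⟩
        exact ⟨hlevel.2 hpq, hxa.trans (aux_reach_mono hlevel hr)⟩
    have h1 : e' ∈ C.edgeSet := Subgraph.edgeSet_mono hsub he'
    have h2 : l'' ≤ F e' := csInf_le (OrderBot.bddBelow _) ⟨e', h1, rfl⟩
    exact absurd (hFe'.trans_lt hl1) (not_lt.mpr h2)

theorem stmt16 (G : SimpleGraph V) (hG : G.Connected) (F F' : Sym2 V → NNReal)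
    (hle : ∀ e, F' e ≤ F e) :
    IsSeparation G F F' ↔
      ∀ X Y : G.Subgraph, IsMinimum G F X → IsMinimum G F Y → X ≠ Y →
        connValSub G F' X Y = connValSub G F X Y := by
  constructor
  · intro hsep X Y hX hY hXY
    obtain ⟨lX, x₀, hx₀, rfl, hminX⟩ := hX
    obtain ⟨lY, y₀, hy₀, rfl, hminY⟩ := hY
    have hXmin : IsMinimum G F (compOf G (levelSub G F lX) x₀) := ⟨lX, x₀, hx₀, rfl, hminX⟩
    have hYmin : IsMinimum G F (compOf G (levelSub G F lY) y₀) := ⟨lY, y₀, hy₀, rfl, hminY⟩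
    have hx₀X : x₀ ∈ (compOf G (levelSub G F lX) x₀).verts := ⟨hx₀, Reachable.refl x₀⟩
    have hy₀Y : y₀ ∈ (compOf G (levelSub G F lY) y₀).verts := ⟨hy₀, Reachable.refl y₀⟩
    set lam := connVal G F x₀ y₀ with hlam
    have hlamX : lX < lam := by
      by_contra h
      push_neg at h
      have hreach : (levelSub G F lX).spanningCoe.Reachable x₀ y₀ := aux_reach_of_le hG h
      have hy₀X : y₀ ∈ (compOf G (levelSub G F lX) x₀).verts := by
        rcases aux_reach_vert hreach with rfl | hv
        · exact hx₀X
        · exact ⟨hv, hreach⟩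
      exact hXY (aux_min_disj hXmin hYmin hy₀X hy₀Y)
    have hlamY : lY < lam := by
      by_contra h
      push_neg at h
      have h' : connVal G F y₀ x₀ ≤ lY := by
        rw [aux_connVal_comm]; exact h
      have hreach : (levelSub G F lY).spanningCoe.Reachable y₀ x₀ := aux_reach_of_le hG h'
      have hx₀Y : x₀ ∈ (compOf G (levelSub G F lY) y₀).verts := by
        rcases aux_reach_vert hreach with rfl | hv
        · exact hy₀Y
        · exact ⟨hv, hreach⟩
      exact hXY (aux_min_disj hXmin hYmin hx₀X hx₀Y)
    have key : ∀ m ∈ (compOf G (levelSub G F lX) x₀).verts,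
        ∀ m' ∈ (compOf G (levelSub G F lY) y₀).verts,
        connVal G F m m' = lam ∧ connVal G F' m m' = lam := by
      intro m hm m' hm'
      have h1 : connVal G F m x₀ ≤ lX := aux_min_connVal_le hm hx₀X
      have h2 : connVal G F x₀ m ≤ lX := by rw [aux_connVal_comm]; exact h1
      have h3 : connVal G F m' y₀ ≤ lY := aux_min_connVal_le hm' hy₀Y
      have h4 : connVal G F y₀ m' ≤ lY := by rw [aux_connVal_comm]; exact h3
      have hup : connVal G F m m' ≤ lam := by
        refine (aux_ultra3 hG F m x₀ y₀ m').trans ?_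
        refine max_le (h1.trans hlamX.le) (max_le le_rfl (h4.trans hlamY.le))
      have hdown : lam ≤ connVal G F m m' :=
        aux_max3 (aux_ultra3 hG F x₀ m m' y₀) (lt_of_le_of_lt h2 hlamX) (lt_of_le_of_lt h3 hlamY)
      have hFmm : connVal G F m m' = lam := le_antisymm hup hdown
      have hsepm : SeparatedAt G F m m' lam := by
        refine ⟨hFmm, ?_⟩
        rw [aux_min_vertAlt hm hminX, aux_min_vertAlt hm' hminY]
        exact max_lt hlamX hlamY
      exact ⟨hFmm, (hsep m m' lam hsepm).1⟩
    have hsubF : connValSub G F (compOf G (levelSub G F lX) x₀) (compOf G (levelSub G F lY) y₀)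
        = lam := by
      refine le_antisymm
        (csInf_le (OrderBot.bddBelow _) ⟨x₀, hx₀X, y₀, hy₀Y, (key _ hx₀X _ hy₀Y).1⟩)
        (le_csInf ⟨lam, x₀, hx₀X, y₀, hy₀Y, (key _ hx₀X _ hy₀Y).1⟩ ?_)
      rintro c ⟨m, hm, m', hm', rfl⟩
      exact ((key _ hm _ hm').1).ge
    have hsubF' : connValSub G F' (compOf G (levelSub G F lX) x₀) (compOf G (levelSub G F lY) y₀)
        = lam := by
      refine le_antisymm
        (csInf_le (OrderBot.bddBelow _) ⟨x₀, hx₀X, y₀, hy₀Y, (key _ hx₀X _ hy₀Y).2⟩)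
        (le_csInf ⟨lam, x₀, hx₀X, y₀, hy₀Y, (key _ hx₀X _ hy₀Y).2⟩ ?_)
      rintro c ⟨m, hm, m', hm', rfl⟩
      exact ((key _ hm _ hm').2).ge
    rw [hsubF, hsubF']
  · intro h x y lam hxylam
    obtain ⟨hconn, hmax⟩ := hxylam
    have hlampos : 0 < lam := (zero_le (a := max (vertAlt G F x) (vertAlt G F y))).trans_lt hmax
    have hxy : x ≠ y := by
      rintro rfl
      have : connVal G F x x ≤ 0 := aux_connVal_le (Reachable.refl x)
      rw [hconn] at this
      exact absurd this (not_le.mpr hlampos)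
    obtain ⟨zx, hzx⟩ := aux_exists_adj hG hxy x
    obtain ⟨zy, hzy⟩ := aux_exists_adj hG hxy y
    have hx1 : vertAlt G F x < lam := lt_of_le_of_lt (le_max_left _ _) hmax
    have hy1 : vertAlt G F y < lam := lt_of_le_of_lt (le_max_right _ _) hmax
    obtain ⟨X, hXmin, m, hmX, hreachxm⟩ := aux_descent G F (aux_vertAlt_mem hzx)
    obtain ⟨Y, hYmin, m', hm'Y, hreachym'⟩ := aux_descent G F (aux_vertAlt_mem hzy)
    have hcxm : connVal G F x m ≤ vertAlt G F x := aux_connVal_le hreachxm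
    have hcym' : connVal G F y m' ≤ vertAlt G F y := aux_connVal_le hreachym'
    obtain ⟨lX, x₀, hx₀, rfl, hminX⟩ := hXmin
    obtain ⟨lY, y₀, hy₀, rfl, hminY⟩ := hYmin
    have hXmin' : IsMinimum G F (compOf G (levelSub G F lX) x₀) := ⟨lX, x₀, hx₀, rfl, hminX⟩
    have hYmin' : IsMinimum G F (compOf G (levelSub G F lY) y₀) := ⟨lY, y₀, hy₀, rfl, hminY⟩
    have hvmx : vertAlt G F m ≤ vertAlt G F x := by
      rcases aux_reach_vert hreachxm with rfl | hv
      · exact le_rfl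
      · exact aux_vertAlt_le hv
    have hvmy : vertAlt G F m' ≤ vertAlt G F y := by
      rcases aux_reach_vert hreachym' with rfl | hv
      · exact le_rfl
      · exact aux_vertAlt_le hv
    have hlX : lX < lam := by
      have := aux_min_vertAlt hmX hminX
      rw [← this]
      exact lt_of_le_of_lt hvmx hx1
    have hlY : lY < lam := by
      have := aux_min_vertAlt hm'Y hminY
      rw [← this]
      exact lt_of_le_of_lt hvmy hy1
    have hcm'y : connVal G F m' y ≤ vertAlt G F y := by
      rw [aux_connVal_comm]; exact hcym'
    have hdown : lam ≤ connVal G F m m' := by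
      have h3 := aux_ultra3 hG F x m m' y
      rw [hconn] at h3
      exact aux_max3 h3 (hcxm.trans_lt hx1) (hcm'y.trans_lt hy1)
    have hne : compOf G (levelSub G F lX) x₀ ≠ compOf G (levelSub G F lY) y₀ := by
      intro heq
      have hm'X : m' ∈ (compOf G (levelSub G F lX) x₀).verts := heq ▸ hm'Y
      have := aux_min_connVal_le hmX hm'X
      exact absurd (hdown.trans this) (not_le.mpr hlX)
    have hcmx : connVal G F m x ≤ vertAlt G F x := by
      rw [aux_connVal_comm]; exact hcxm
    have hup : connVal G F m m' ≤ lam := by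
      refine (aux_ultra3 hG F m x y m').trans ?_
      exact max_le (hcmx.trans hx1.le) (max_le hconn.le (hcym'.trans hy1.le))
    have hmm' : connVal G F m m' = lam := le_antisymm hup hdown
    have hsubF : connValSub G F (compOf G (levelSub G F lX) x₀) (compOf G (levelSub G F lY) y₀)
        = lam := by
      refine le_antisymm (csInf_le (OrderBot.bddBelow _) ⟨m, hmX, m', hm'Y, hmm'⟩)
        (le_csInf ⟨lam, m, hmX, m', hm'Y, hmm'⟩ ?_)
      rintro c ⟨p, hp, p', hp', rfl⟩
      have hmp : connVal G F m p ≤ lX := aux_min_connVal_le hmX hp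
      have hp'm' : connVal G F p' m' ≤ lY := aux_min_connVal_le hp' hm'Y
      have h3 := aux_ultra3 hG F m p p' m'
      rw [hmm'] at h3
      exact aux_max3 h3 (hmp.trans_lt hlX) (hp'm'.trans_lt hlY)
    have hsubF' : connValSub G F' (compOf G (levelSub G F lX) x₀) (compOf G (levelSub G F lY) y₀)
        = lam := (h _ _ hXmin' hYmin' hne).trans hsubF
    have hFm' : lam ≤ connVal G F' m m' := by
      rw [← hsubF']
      exact csInf_le (OrderBot.bddBelow _) ⟨m, hmX, m', hm'Y, rfl⟩
    have hF'mx : connVal G F' m x < lam := by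
      refine lt_of_le_of_lt ((aux_connVal_anti hG hle m x).trans ?_) hx1
      exact hcmx
    have hF'ym' : connVal G F' y m' < lam :=
      lt_of_le_of_lt ((aux_connVal_anti hG hle y m').trans hcym') hy1
    have hF'm'y : connVal G F' m' y < lam := by
      rw [aux_connVal_comm]; exact hF'ym'
    have hmain : lam ≤ connVal G F' x y := by
      have h3 := aux_ultra3 hG F' m x y m'
      have h4 : lam ≤ max (connVal G F' m x) (max (connVal G F' x y) (connVal G F' y m')) :=
        hFm'.trans h3
      exact aux_max3 h4 hF'mx hF'ym'
    have hle' : connVal G F' x y ≤ lam := (aux_connVal_anti hG hle x y).trans hconn.le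
    refine ⟨le_antisymm hle' hmain, ?_⟩
    exact max_lt (lt_of_le_of_lt (aux_vertAlt_anti hle hzx) hx1)
      (lt_of_le_of_lt (aux_vertAlt_anti hle hzy) hy1)
end
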